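/- arXiv:0804.0583 — 2 statements merged into one kernel-verified Lean document; each statement's English description precedes it below -/
import Mathlib

section
/- A real Banach space (X,‖·‖) has the Mazur intersection property if and only if the set of weak*-denting points of the closed unit ball B_{X*} of X* is norm dense in the unit sphere S_{X*} of X*. -/
/-- A Banach space has the Mazur intersection property if every nonempty bounded
closed convex set is an intersection of closed balls. -/
def HasMIP (X : Type*) [NormedAddCommGroup X] [NormedSpace ℝ X] : Prop :=
  ∀ K : Set X, K.Nonempty → Bornology.IsBounded K → IsClosed K → Convex ℝ K →
    ∃ B : Set (X × ℝ), K = ⋂ p ∈ B, Metric.closedBall p.1 p.2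

section GGS

open Metric NormedSpace Bornology Set

variable {X : Type*} [NormedAddCommGroup X] [NormedSpace ℝ X]

lemma apply_le_norm (f : StrongDual ℝ X) (y : X) : f y ≤ ‖f‖ * ‖y‖ :=
  (le_abs_self _).trans (by simpa [Real.norm_eq_abs] using f.le_opNorm y)

lemma abs_apply_le_norm (f : StrongDual ℝ X) (y : X) : |f y| ≤ ‖f‖ * ‖y‖ := by
  simpa [Real.norm_eq_abs] using f.le_opNorm y

/-- If `h z ≤ c` for all unit vectors `z`, then `‖h‖ ≤ c`. -/
lemma opNorm_le_of_unit (h : StrongDual ℝ X) {c : ℝ} (hc : 0 ≤ c)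
    (H : ∀ z : X, ‖z‖ ≤ 1 → h z ≤ c) : ‖h‖ ≤ c := by
  refine h.opNorm_le_bound hc (fun z => ?_)
  rcases eq_or_ne z 0 with rfl | hz
  · simp [hc]
  · have hzp : 0 < ‖z‖ := norm_pos_iff.mpr hz
    have h1 : h (‖z‖⁻¹ • z) ≤ c := H _ (by simp [norm_smul, inv_mul_cancel₀ hzp.ne'])
    have h2 : h (-(‖z‖⁻¹ • z)) ≤ c := H _ (by simp [norm_smul, inv_mul_cancel₀ hzp.ne'])
    rw [map_smul, smul_eq_mul] at h1
    rw [map_neg, map_smul, smul_eq_mul] at h2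
    rw [Real.norm_eq_abs]
    rw [abs_le]
    rw [inv_mul_le_iff₀ hzp] at h1
    rw [← mul_neg, inv_mul_le_iff₀ hzp] at h2
    constructor <;> linarith

set_option maxHeartbeats 1000000 in
lemma mip_core (mip : HasMIP X) (f : StrongDual ℝ X) (hf : ‖f‖ = 1) {ε δ : ℝ}
    (hε : 0 < ε) (hδ : 0 < δ) :
    ∃ (g : StrongDual ℝ X) (x : X) (l : ℝ), ‖g‖ = 1 ∧ ‖g - f‖ < δ ∧ l < g x ∧
      Metric.diam {h : StrongDual ℝ X | ‖h‖ ≤ 1 ∧ l < h x} < ε := by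
  set m := min (min ε δ) 1 with hm
  have hm0 : 0 < m := lt_min (lt_min hε hδ) one_pos
  have hm1 : m ≤ 1 := min_le_right _ _
  have hmε : m ≤ ε := (min_le_left _ _).trans (min_le_left _ _)
  have hmδ : m ≤ δ := (min_le_left _ _).trans (min_le_right _ _)
  set d := m / 20 with hd
  set t := m / 100 with ht
  set κ := m / 100 with hκ
  have hd0 : 0 < d := by positivity
  have ht0 : 0 < t := by positivity
  have hκ0 : 0 < κ := by positivity
  have hd1 : d ≤ 1 / 20 := by rw [hd]; linarith
  -- find x̂ with f x̂ = 1 - d/2, ‖x̂‖ ≤ 1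
  obtain ⟨w, hw1, hw2⟩ : ∃ w : X, ‖w‖ ≤ 1 ∧ 1 - d / 2 < f w := by
    by_contra hcon
    push_neg at hcon
    have : ‖f‖ ≤ 1 - d / 2 := by
      refine opNorm_le_of_unit f (by linarith) (fun z hz => (hcon z hz))
    linarith [hf ▸ this]
  have hfw0 : 0 < f w := by linarith
  set xh := ((1 - d / 2) / f w) • w with hxh
  have hfxh : f xh = 1 - d / 2 := by
    rw [hxh, map_smul, smul_eq_mul, div_mul_cancel₀]
    exact hfw0.ne'
  have hxh1 : ‖xh‖ ≤ 1 := by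
    rw [hxh, norm_smul, Real.norm_eq_abs, abs_of_pos (div_pos (by linarith) hfw0)]
    have hq : (1 - d / 2) / f w ≤ 1 := by
      rw [div_le_one hfw0]; linarith
    nlinarith [norm_nonneg w]
  -- the "lens with flange" set
  set A : Set X := {z : X | ‖z‖ ≤ 1 ∧ f z ≤ 1 - d} ∪
    {z : X | ∃ v : X, ‖v‖ ≤ 1 ∧ f v = 0 ∧ z = xh + v} with hA
  set K := closure (convexHull ℝ A) with hK
  have hAsub : A ⊆ closedBall (0 : X) 2 := by
    rintro z (⟨hz1, _⟩ | ⟨v, hv1, _, rfl⟩)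
    · rw [mem_closedBall_zero_iff]; linarith
    · rw [mem_closedBall_zero_iff]
      calc ‖xh + v‖ ≤ ‖xh‖ + ‖v‖ := norm_add_le _ _
      _ ≤ 2 := by linarith
  have hKball : K ⊆ closedBall (0 : X) 2 :=
    closure_minimal (convexHull_min hAsub (convex_closedBall _ _)) Metric.isClosed_closedBall
  have h0A : (0 : X) ∈ A := Or.inl ⟨by simp, by simp; linarith⟩
  have hKne : K.Nonempty := ⟨0, subset_closure (subset_convexHull ℝ A h0A)⟩
  have hKbdd : IsBounded K := (isBounded_closedBall).subset hKball
  have hKcl : IsClosed K := isClosed_closure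
  have hKcv : Convex ℝ K := (convex_convexHull ℝ A).closure
  have hKf : ∀ k ∈ K, f k ≤ 1 - d / 2 := by
    have hse : A ⊆ {z : X | f z ≤ 1 - d / 2} := by
      rintro z (⟨_, hz2⟩ | ⟨v, _, hv2, rfl⟩)
      · simp only [mem_setOf_eq]; linarith
      · simp only [mem_setOf_eq, map_add, hfxh, hv2]; linarith
    have hcv : Convex ℝ {z : X | f z ≤ 1 - d / 2} :=
      convex_halfSpace_le ⟨map_add f, map_smul f⟩ _
    have hcl : IsClosed {z : X | f z ≤ 1 - d / 2} :=
      isClosed_Iic.preimage f.continuous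
    exact fun k hk => closure_minimal (convexHull_min hse hcv) hcl hk
  have hKmem1 : ∀ z : X, ‖z‖ ≤ 1 → f z ≤ 1 - d → z ∈ K := fun z h1 h2 =>
    subset_closure (subset_convexHull ℝ A (Or.inl ⟨h1, h2⟩))
  have hKmem2 : ∀ v : X, ‖v‖ ≤ 1 → f v = 0 → xh + v ∈ K := fun v h1 h2 =>
    subset_closure (subset_convexHull ℝ A (Or.inr ⟨v, h1, h2, rfl⟩))
  -- the point outside K
  set x₀ := (1 + t) • xh with hx₀
  have hx₀app : ∀ h' : StrongDual ℝ X, h' x₀ = (1 + t) * h' xh := fun h' => by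
    rw [hx₀, map_smul, smul_eq_mul]
  have hfx₀ : f x₀ = (1 + t) * (1 - d / 2) := by rw [hx₀app, hfxh]
  have hx₀K : x₀ ∉ K := by
    intro hmem
    have := hKf x₀ hmem
    rw [hfx₀] at this
    nlinarith
  -- apply MIP
  obtain ⟨B, hB⟩ := mip K hKne hKbdd hKcl hKcv
  have hx₀i : x₀ ∉ ⋂ p ∈ B, closedBall p.1 p.2 := hB ▸ hx₀K
  rw [Set.mem_iInter₂] at hx₀i
  push_neg at hx₀i
  obtain ⟨p, hpB, hx₀p⟩ := hx₀i
  set c := p.1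
  set r := p.2
  have hKc : ∀ k ∈ K, ‖k - c‖ ≤ r := by
    intro k hk
    have : k ∈ ⋂ p ∈ B, closedBall p.1 p.2 := hB ▸ hk
    rw [Set.mem_iInter₂] at this
    have := this p hpB
    rwa [mem_closedBall, dist_eq_norm] at this
  have hx₀c : r < ‖x₀ - c‖ := by
    rw [mem_closedBall, dist_eq_norm, not_le] at hx₀p
    exact hx₀p
  have hr0 : 0 ≤ r := le_trans (norm_nonneg _) (hKc 0 (subset_closure (subset_convexHull ℝ A h0A)))
  set u := x₀ - c with hu
  have hu0 : u ≠ 0 := by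
    intro h
    rw [h, norm_zero] at hx₀c
    linarith
  have hun : 0 < ‖u‖ := norm_pos_iff.mpr hu0
  set l := max r ((1 - κ) * ‖u‖) with hl
  have hlu : l < ‖u‖ := by
    apply max_lt hx₀c
    nlinarith
  have hrl : r ≤ l := le_max_left _ _
  obtain ⟨g, hg1, hg2⟩ := exists_dual_vector ℝ u (norm_ne_zero_iff.mpr hu0)
  have hg2' : g u = ‖u‖ := by exact_mod_cast hg2
  set Sl : Set (StrongDual ℝ X) := {h : StrongDual ℝ X | ‖h‖ ≤ 1 ∧ l < h u} with hSl
  have hgSl : g ∈ Sl := ⟨le_of_eq hg1, by rw [hg2']; exact hlu⟩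
  -- main estimate: every member of the slice is close to f
  have key : ∀ h ∈ Sl, ‖h - f‖ ≤ 5 * t + κ + 2 * d := by
    rintro h ⟨hh1, hh2⟩
    -- (a) norm lower bound
    have ha : 1 - κ ≤ ‖h‖ := by
      have h1 : (1 - κ) * ‖u‖ ≤ l := le_max_right _ _
      have h2 : h u ≤ ‖h‖ * ‖u‖ := apply_le_norm h u
      have h3 : (1 - κ) * ‖u‖ < ‖h‖ * ‖u‖ := by linarith
      exact (lt_of_mul_lt_mul_right h3 hun.le).le
    -- (b) strict separation of K from x₀
    have hb : ∀ k ∈ K, h k < h x₀ := by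
      intro k hk
      have h1 : h (k - c) ≤ r := by
        calc h (k - c) ≤ ‖h‖ * ‖k - c‖ := apply_le_norm h _
        _ ≤ 1 * r := mul_le_mul hh1 (hKc k hk) (norm_nonneg _) zero_le_one
        _ = r := one_mul r
      have h2 : l < h x₀ - h c := by rw [← map_sub]; exact hh2
      rw [map_sub] at h1
      linarith
    clear_value m d t κ A K x₀ c r u l Sl
    clear hB hKball hAsub hKc hx₀p hx₀K hKf hKcv hKcl hKbdd hKne hfx₀ hgSl
      hg2 hg2' hg1 hw1 hw2 hfw0 hlu hrl hun hu0 hr0 hpB mip hh2 hm hd ht hκ hA hK hx₀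
    -- (c) h x̂ > 0
    have hxhA : xh ∈ K := by simpa using hKmem2 0 (by simp) (by simp)
    have hc' : h xh < (1 + t) * h xh := by
      have := hb xh hxhA
      rwa [hx₀app] at this
    have hcpos : 0 < h xh := by nlinarith
    have hxhle : h xh ≤ 1 := by
      calc h xh ≤ ‖h‖ * ‖xh‖ := apply_le_norm h xh
      _ ≤ 1 * 1 := mul_le_mul hh1 hxh1 (norm_nonneg _) zero_le_one
      _ = 1 := one_mul 1
    -- (d,e) kernel bound
    have hker : ∀ v : X, f v = 0 → |h v| ≤ t * ‖v‖ := by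
      intro v hv
      rcases eq_or_ne v 0 with rfl | hv0
      · simp
      · have hvp : 0 < ‖v‖ := norm_pos_iff.mpr hv0
        have base : ∀ v' : X, ‖v'‖ ≤ 1 → f v' = 0 → h v' < t * h xh := by
          intro v' hv1' hv2'
          have hmem : xh + v' ∈ K := hKmem2 v' hv1' hv2'
          have := hb _ hmem
          rw [hx₀app, map_add] at this
          nlinarith
        have h1 := base (‖v‖⁻¹ • v) (by simp [norm_smul, inv_mul_cancel₀ hvp.ne'])
          (by rw [map_smul, smul_eq_mul, hv, mul_zero])
        have h2 := base (-(‖v‖⁻¹ • v)) (by simp [norm_smul, inv_mul_cancel₀ hvp.ne'])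
          (by rw [map_neg, map_smul, smul_eq_mul, hv, mul_zero, neg_zero])
        rw [map_smul, smul_eq_mul] at h1
        rw [map_neg, map_smul, smul_eq_mul] at h2
        have htxh : t * h xh ≤ t := by nlinarith
        have h1' : ‖v‖⁻¹ * h v ≤ t := le_trans h1.le htxh
        have h2' : -(‖v‖⁻¹ * h v) ≤ t := le_trans h2.le htxh
        rw [inv_mul_le_iff₀ hvp] at h1'
        rw [← mul_neg, inv_mul_le_iff₀ hvp] at h2'
        rw [abs_le]
        constructor <;> linarith
    -- (f) ‖h‖ ≤ (1+2d+2t) * h x̂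
    have hnormub : ‖h‖ ≤ (1 + 2 * d + 2 * t) * h xh := by
      apply opNorm_le_of_unit h (by nlinarith)
      intro z hz
      have hd1' : (0:ℝ) < 1 + d := by linarith
      have hfz : f z ≤ 1 := by
        have := apply_le_norm f z
        rw [hf, one_mul] at this
        linarith
      obtain ⟨z', hz'n, hz'f, hzeq⟩ :
          ∃ z', ‖z'‖ ≤ 1 ∧ f z' ≤ 1 - d ∧ z = (1 + d) • z' + d • xh := by
        refine ⟨(1 + d)⁻¹ • (z - d • xh), ?_, ?_, ?_⟩
        · rw [norm_smul, Real.norm_eq_abs, abs_of_pos (inv_pos.mpr hd1')]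
          have hzz : ‖z - d • xh‖ ≤ 1 + d := by
            calc ‖z - d • xh‖ ≤ ‖z‖ + ‖d • xh‖ := norm_sub_le _ _
            _ ≤ 1 + d := by
                rw [norm_smul, Real.norm_eq_abs, abs_of_pos hd0]
                nlinarith
          calc (1 + d)⁻¹ * ‖z - d • xh‖ ≤ (1 + d)⁻¹ * (1 + d) :=
                mul_le_mul_of_nonneg_left hzz (inv_pos.mpr hd1').le
          _ = 1 := inv_mul_cancel₀ hd1'.ne'
        · rw [map_smul, smul_eq_mul, map_sub, map_smul, smul_eq_mul, hfxh]
          rw [inv_mul_le_iff₀ hd1']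
          nlinarith
        · rw [smul_inv_smul₀ hd1'.ne']
          abel
      have hz'K : z' ∈ K := hKmem1 z' hz'n hz'f
      have h1 : h z' < (1 + t) * h xh := by
        have := hb z' hz'K
        rwa [hx₀app] at this
      have hzval : h z = (1 + d) * h z' + d * h xh := by
        rw [hzeq, map_add, map_smul, map_smul, smul_eq_mul, smul_eq_mul]
      rw [hzval]
      have e1 : (1 + d) * h z' ≤ (1 + d) * ((1 + t) * h xh) :=
        mul_le_mul_of_nonneg_left h1.le hd1'.le
      nlinarith [mul_nonneg (mul_nonneg ht0.le (by linarith : (0:ℝ) ≤ 1 - d)) hcpos.le]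
    -- (g) e
    have hd2 : (0:ℝ) < 1 - d / 2 := by linarith
    obtain ⟨e, hfe, hen, hhe_eq⟩ :
        ∃ e : X, f e = 1 ∧ ‖e‖ ≤ 1 + d ∧ h e = (1 - d / 2)⁻¹ * h xh := by
      refine ⟨(1 - d / 2)⁻¹ • xh, ?_, ?_, ?_⟩
      · rw [map_smul, smul_eq_mul, hfxh, inv_mul_cancel₀ hd2.ne']
      · rw [norm_smul, Real.norm_eq_abs, abs_of_pos (inv_pos.mpr hd2)]
        rw [inv_mul_le_iff₀ hd2]
        nlinarith
      · rw [map_smul, smul_eq_mul]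
    -- (h) h ≈ (h e) f
    have happrox : ‖h - h e • f‖ ≤ 3 * t := by
      apply opNorm_le_of_unit _ (by positivity)
      intro z hz
      have hv : f (z - f z • e) = 0 := by
        rw [map_sub, map_smul, smul_eq_mul, hfe, mul_one, sub_self]
      have hvn : ‖z - f z • e‖ ≤ 3 := by
        have hfz : |f z| ≤ 1 := by
          have := abs_apply_le_norm f z
          rw [hf, one_mul] at this
          linarith
        calc ‖z - f z • e‖ ≤ ‖z‖ + ‖f z • e‖ := norm_sub_le _ _
        _ ≤ 1 + |f z| * ‖e‖ := by rw [norm_smul, Real.norm_eq_abs]; linarith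
        _ ≤ 3 := by
            have := mul_le_mul hfz hen (norm_nonneg e) zero_le_one
            linarith
      have hval : (h - h e • f) z = h (z - f z • e) := by
        simp only [ContinuousLinearMap.sub_apply, ContinuousLinearMap.smul_apply,
          smul_eq_mul, map_sub, map_smul]
        ring
      rw [hval]
      calc h (z - f z • e) ≤ |h (z - f z • e)| := le_abs_self _
      _ ≤ t * ‖z - f z • e‖ := hker _ hv
      _ ≤ t * 3 := mul_le_mul_of_nonneg_left hvn ht0.le
      _ = 3 * t := by ring
    -- (i) bounds on h e
    have hhe_ub : h e ≤ 1 + d := by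
      calc h e ≤ ‖h‖ * ‖e‖ := apply_le_norm h e
      _ ≤ 1 * (1 + d) := mul_le_mul hh1 hen (norm_nonneg _) zero_le_one
      _ = 1 + d := one_mul _
    have hxh_lb : 1 - κ - 2 * d - 2 * t ≤ h xh := by
      have hCpos : (0:ℝ) < 1 + 2 * d + 2 * t := by linarith
      have h1 : 1 - κ ≤ (1 + 2 * d + 2 * t) * h xh := le_trans ha hnormub
      nlinarith [mul_nonneg hκ0.le (by linarith : (0:ℝ) ≤ 2 * d + 2 * t),
        sq_nonneg (2 * d + 2 * t)]
    have hhe_lb : 1 - κ - 2 * d - 2 * t ≤ h e := by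
      rw [hhe_eq]
      have h1 : h xh ≤ (1 - d / 2)⁻¹ * h xh := by
        rw [le_inv_mul_iff₀ hd2]
        nlinarith [mul_nonneg hd0.le hcpos.le]
      linarith
    -- (j) conclusion
    have habs : |h e - 1| ≤ κ + 2 * d + 2 * t := by
      rw [abs_le]
      constructor <;> linarith
    calc ‖h - f‖ ≤ ‖h - h e • f‖ + ‖h e • f - f‖ := by
          have h9 : h - f = (h - h e • f) + (h e • f - f) := by abel
          rw [h9]
          exact norm_add_le _ _
    _ ≤ 3 * t + |h e - 1| := by
        have : ‖h e • f - f‖ = |h e - 1| := by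
          rw [show h e • f - f = (h e - 1) • f by ext z; simp [sub_mul]]
          rw [norm_smul, Real.norm_eq_abs, hf, mul_one]
        linarith
    _ ≤ 5 * t + κ + 2 * d := by linarith
  -- assemble
  have hbound : 5 * t + κ + 2 * d = (16 / 100) * m := by rw [ht, hκ, hd]; ring
  refine ⟨g, u, l, hg1, ?_, by rw [hg2']; exact hlu, ?_⟩
  · have := key g hgSl
    rw [hbound] at this
    linarith
  · have hdiam : Metric.diam Sl ≤ 2 * ((16 / 100) * m) := by
      apply Metric.diam_le_of_forall_dist_le (by linarith)
      intro h₁ hm₁ h₂ hm₂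
      have e₁ := key h₁ hm₁
      have e₂ := key h₂ hm₂
      rw [hbound] at e₁ e₂
      calc dist h₁ h₂ ≤ dist h₁ f + dist f h₂ := dist_triangle _ _ _
      _ = ‖h₁ - f‖ + ‖h₂ - f‖ := by rw [dist_eq_norm, dist_eq_norm, norm_sub_rev f h₂]
      _ ≤ 2 * ((16 / 100) * m) := by linarith
    calc Metric.diam Sl ≤ 2 * ((16 / 100) * m) := hdiam
    _ < m := by linarith
    _ ≤ ε := hmε

set_option maxHeartbeats 800000 in
lemma mip_of_dense
    (hdense : ∀ f : StrongDual ℝ X, ‖f‖ = 1 →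
        f ∈ closure {g : StrongDual ℝ X | ‖g‖ ≤ 1 ∧
          ∀ ε : ℝ, 0 < ε → ∃ (x : X) (l : ℝ), l < g x ∧
            Metric.diam {h : StrongDual ℝ X | ‖h‖ ≤ 1 ∧ l < h x} < ε}) :
    HasMIP X := by
  intro K hKne hKbdd hKcl hKcv
  refine ⟨{p : X × ℝ | K ⊆ closedBall p.1 p.2}, ?_⟩
  apply Set.Subset.antisymm
  · intro k hk
    exact Set.mem_iInter₂.mpr fun p hp => hp hk
  intro y hy
  by_contra hyK
  -- find a ball containing K and missing y; contradiction with hy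
  suffices hball : ∃ c ρ, K ⊆ closedBall c ρ ∧ y ∉ closedBall c ρ by
    obtain ⟨c, ρ, h1, h2⟩ := hball
    exact h2 (Set.mem_iInter₂.mp hy (c, ρ) h1)
  obtain ⟨f, s, hfs, hsx⟩ := geometric_hahn_banach_closed_point hKcv hKcl hyK
  obtain ⟨k₀, hk₀⟩ := hKne
  have hf0 : f ≠ 0 := by
    intro h
    rw [h] at hfs hsx
    exact absurd hsx (not_lt.mpr (le_of_lt (hfs k₀ hk₀)))
  have hfn : 0 < ‖f‖ := norm_pos_iff.mpr hf0
  set f₁ : StrongDual ℝ X := ‖f‖⁻¹ • f with hf₁def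
  have hf₁ : ‖f₁‖ = 1 := by
    rw [hf₁def, norm_smul, Real.norm_eq_abs, abs_of_pos (inv_pos.mpr hfn),
      inv_mul_cancel₀ hfn.ne']
  set s₁ := ‖f‖⁻¹ * s with hs₁def
  have hsep : ∀ k ∈ K, f₁ k ≤ s₁ := by
    intro k hk
    have : f₁ k = ‖f‖⁻¹ * f k := by rw [hf₁def]; rfl
    rw [this, hs₁def]
    exact mul_le_mul_of_nonneg_left (hfs k hk).le (inv_pos.mpr hfn).le
  have hy1 : s₁ < f₁ y := by
    have : f₁ y = ‖f‖⁻¹ * f y := by rw [hf₁def]; rfl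
    rw [this, hs₁def]
    exact mul_lt_mul_of_pos_left hsx (inv_pos.mpr hfn)
  set δ₀ := f₁ y - s₁ with hδ₀def
  have hδ₀ : 0 < δ₀ := by rw [hδ₀def]; linarith
  obtain ⟨M₀, hM₀⟩ := hKbdd.subset_closedBall 0
  set M := max M₀ ‖y‖ + 1 with hMdef
  have hM0 : 0 < M := by
    have : (0:ℝ) ≤ max M₀ ‖y‖ := le_trans (norm_nonneg y) (le_max_right _ _)
    linarith
  have hKM : ∀ k ∈ K, ‖k‖ ≤ M := by
    intro k hk
    have := hM₀ hk
    rw [mem_closedBall_zero_iff] at this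
    have h2 : M₀ ≤ max M₀ ‖y‖ := le_max_left _ _
    linarith
  have hyM : ‖y‖ ≤ M := by
    have h2 : ‖y‖ ≤ max M₀ ‖y‖ := le_max_right _ _
    linarith
  set ε := δ₀ / (8 * (M + 1)) with hεdef
  have hε : 0 < ε := by positivity
  -- pick a denting point g near f₁
  have hcl := hdense f₁ hf₁
  rw [Metric.mem_closure_iff] at hcl
  obtain ⟨g, ⟨hg1, hgd⟩, hgf⟩ := hcl ε hε
  rw [dist_eq_norm] at hgf
  have hdiff : ∀ z : X, |g z - f₁ z| ≤ ε * ‖z‖ := by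
    intro z
    have h1 : |(g - f₁) z| ≤ ‖g - f₁‖ * ‖z‖ := by
      simpa [Real.norm_eq_abs] using (g - f₁).le_opNorm z
    rw [ContinuousLinearMap.sub_apply] at h1
    have h2 : ‖g - f₁‖ * ‖z‖ ≤ ε * ‖z‖ :=
      mul_le_mul_of_nonneg_right (by rw [norm_sub_rev]; exact hgf.le) (norm_nonneg z)
    linarith
  have hgk : ∀ k ∈ K, g k ≤ s₁ + ε * M := by
    intro k hk
    have h1 := (abs_le.mp (hdiff k)).2
    have h2 : ε * ‖k‖ ≤ ε * M := mul_le_mul_of_nonneg_left (hKM k hk) hε.le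
    have := hsep k hk
    linarith
  have hgy : f₁ y - ε * M ≤ g y := by
    have h1 := (abs_le.mp (hdiff y)).1
    have h2 : ε * ‖y‖ ≤ ε * M := mul_le_mul_of_nonneg_left hyM hε.le
    linarith
  -- the denting slice
  obtain ⟨x, l, hl, hdiam⟩ := hgd ε hε
  have hSlbdd : IsBounded {h : StrongDual ℝ X | ‖h‖ ≤ 1 ∧ l < h x} :=
    (isBounded_closedBall (x := (0 : StrongDual ℝ X)) (r := 1)).subset
      (fun h hh => mem_closedBall_zero_iff.mpr hh.1)
  have hε2 : ε < 1 := by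
    have hd1 : δ₀ ≤ 2 * M := by
      have h1 : f₁ (y - k₀) ≤ ‖f₁‖ * ‖y - k₀‖ := apply_le_norm f₁ _
      rw [hf₁, one_mul, map_sub] at h1
      have h2 : ‖y - k₀‖ ≤ ‖y‖ + ‖k₀‖ := norm_sub_le _ _
      have h3 := hsep k₀ hk₀
      have h4 := hKM k₀ hk₀
      rw [hδ₀def]
      linarith
    rw [hεdef]
    rw [div_lt_one (by positivity)]
    linarith
  have hx0 : x ≠ 0 := by
    intro hx
    have hl0 : l < 0 := by
      rw [hx, map_zero] at hl
      exact hl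
    have hmem1 : f₁ ∈ {h : StrongDual ℝ X | ‖h‖ ≤ 1 ∧ l < h x} := by
      constructor
      · rw [hf₁]
      · rw [hx, map_zero]; exact hl0
    have hmem2 : -f₁ ∈ {h : StrongDual ℝ X | ‖h‖ ≤ 1 ∧ l < h x} := by
      constructor
      · rw [norm_neg, hf₁]
      · rw [hx, map_zero]; exact hl0
    have := Metric.dist_le_diam_of_mem hSlbdd hmem1 hmem2
    rw [dist_eq_norm, sub_neg_eq_add] at this
    have h2 : ‖f₁ + f₁‖ = 2 := by
      rw [show f₁ + f₁ = (2:ℝ) • f₁ by module]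
      rw [norm_smul, hf₁, Real.norm_eq_abs]
      norm_num
    rw [h2] at this
    linarith
  -- normalize x
  have hxn : 0 < ‖x‖ := norm_pos_iff.mpr hx0
  set x' := ‖x‖⁻¹ • x with hx'def
  set l' := ‖x‖⁻¹ * l with hl'def
  have hx'1 : ‖x'‖ = 1 := by
    rw [hx'def, norm_smul, Real.norm_eq_abs, abs_of_pos (inv_pos.mpr hxn),
      inv_mul_cancel₀ hxn.ne']
  have happx : ∀ h : StrongDual ℝ X, h x' = ‖x‖⁻¹ * h x := fun h => by
    rw [hx'def, map_smul]; rfl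
  have hseteq : {h : StrongDual ℝ X | ‖h‖ ≤ 1 ∧ l' < h x'} = {h : StrongDual ℝ X | ‖h‖ ≤ 1 ∧ l < h x} := by
    ext h
    simp only [Set.mem_setOf_eq, happx, hl'def]
    constructor
    · rintro ⟨h1, h2⟩
      exact ⟨h1, (mul_lt_mul_iff_right₀ (inv_pos.mpr hxn)).mp h2⟩
    · rintro ⟨h1, h2⟩
      exact ⟨h1, (mul_lt_mul_iff_right₀ (inv_pos.mpr hxn)).mpr h2⟩
  have hl'g : l' < g x' := by
    rw [happx, hl'def]
    exact (mul_lt_mul_iff_right₀ (inv_pos.mpr hxn)).mpr hl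
  have hl'1 : l' < 1 := by
    have h1 : g x' ≤ ‖g‖ * ‖x'‖ := apply_le_norm g x'
    rw [hx'1, mul_one] at h1
    linarith
  -- the norming functional of x'
  have hx'0 : x' ≠ 0 := by
    intro h
    rw [h, norm_zero] at hx'1
    norm_num at hx'1
  obtain ⟨F, hF1, hFx⟩ := exists_dual_vector ℝ x' (norm_ne_zero_iff.mpr hx'0)
  have hFx' : F x' = 1 := by
    have : F x' = ‖x'‖ := by exact_mod_cast hFx
    rw [this, hx'1]
  have hgSl : g ∈ {h : StrongDual ℝ X | ‖h‖ ≤ 1 ∧ l < h x} := ⟨hg1, hl⟩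
  have hFSl : F ∈ {h : StrongDual ℝ X | ‖h‖ ≤ 1 ∧ l < h x} := by
    rw [← hseteq]
    exact ⟨hF1.le, by rw [hFx']; exact hl'1⟩
  have hFg : ‖F - g‖ < ε := by
    have := Metric.dist_le_diam_of_mem hSlbdd hFSl hgSl
    rw [dist_eq_norm] at this
    linarith
  -- choose the center
  set lam := 2 * M / (1 - l') + M + 1 with hlamdef
  have hl'pos : 0 < 1 - l' := by linarith
  have hlamM : M < lam := by
    have : 0 ≤ 2 * M / (1 - l') := by positivity
    rw [hlamdef]
    linarith
  have hlam0 : 0 < lam := lt_trans hM0 hlamM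
  have hlaml : l' < 1 - 2 * M / lam := by
    have hexp : (1 - l') * (2 * M / (1 - l') + M + 1) = 2 * M + (1 - l') * (M + 1) := by
      field_simp
      ring
    have h2 : 2 * M < (1 - l') * lam := by
      rw [hlamdef, hexp]
      have := mul_pos hl'pos (show (0:ℝ) < M + 1 by linarith)
      linarith
    have h3 : 2 * M / lam < 1 - l' := (div_lt_iff₀ hlam0).mpr (by linarith)
    linarith
  set ρ := lam + s₁ + 2 * (ε * M) with hρdef
  refine ⟨-(lam • x'), ρ, ?_, ?_⟩
  · -- K is contained in the ball
    intro k hk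
    rw [mem_closedBall, dist_eq_norm, sub_neg_eq_add]
    have hkM := hKM k hk
    have hz0 : k + lam • x' ≠ 0 := by
      intro hzz
      have h1 : ‖lam • x'‖ = lam := by
        rw [norm_smul, Real.norm_eq_abs, abs_of_pos hlam0, hx'1, mul_one]
      have h2 : k = -(lam • x') := by
        rw [eq_neg_iff_add_eq_zero]
        exact hzz
      rw [h2, norm_neg, h1] at hkM
      linarith
    obtain ⟨h, hh1, hhz⟩ := exists_dual_vector ℝ (k + lam • x') (norm_ne_zero_iff.mpr hz0)
    have hhz' : h (k + lam • x') = ‖k + lam • x'‖ := by exact_mod_cast hhz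
    have hzlow : lam - M ≤ ‖k + lam • x'‖ := by
      have h1 : ‖lam • x'‖ - ‖k‖ ≤ ‖k + lam • x'‖ := by
        have h0 := norm_sub_le (k + lam • x') k
        rw [add_sub_cancel_left] at h0
        linarith
      have h2 : ‖lam • x'‖ = lam := by
        rw [norm_smul, Real.norm_eq_abs, abs_of_pos hlam0, hx'1, mul_one]
      linarith
    have hhk : |h k| ≤ M := by
      have h1 : |h k| ≤ ‖h‖ * ‖k‖ := by
        simpa [Real.norm_eq_abs] using h.le_opNorm k
      rw [hh1, one_mul] at h1
      linarith
    have happval : h (k + lam • x') = h k + lam * h x' := by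
      rw [map_add, map_smul]; rfl
    have hhx' : 1 - 2 * M / lam ≤ h x' := by
      have h1 : lam * h x' = ‖k + lam • x'‖ - h k := by
        rw [← hhz', happval]; ring
      have h2 : lam - 2 * M ≤ lam * h x' := by
        rw [h1]
        have := (abs_le.mp hhk).2
        linarith
      have h3 : (lam - 2 * M) / lam ≤ h x' := by
        rw [div_le_iff₀ hlam0]
        linarith [mul_comm lam (h x')]
      have h4 : (lam - 2 * M) / lam = 1 - 2 * M / lam := by field_simp
      linarith [h4 ▸ h3]
    have hhSl : h ∈ {h : StrongDual ℝ X | ‖h‖ ≤ 1 ∧ l < h x} := by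
      rw [← hseteq]
      exact ⟨hh1.le, by linarith⟩
    have hhg : ‖h - g‖ < ε := by
      have := Metric.dist_le_diam_of_mem hSlbdd hhSl hgSl
      rw [dist_eq_norm] at this
      linarith
    have hhgk : h k ≤ g k + ε * M := by
      have h1 : (h - g) k ≤ ‖h - g‖ * ‖k‖ := apply_le_norm _ _
      rw [ContinuousLinearMap.sub_apply] at h1
      have h2 : ‖h - g‖ * ‖k‖ ≤ ε * M := by
        apply mul_le_mul hhg.le hkM (norm_nonneg k) hε.le
      linarith
    have hhx'ub : h x' ≤ 1 := by
      have h1 : h x' ≤ ‖h‖ * ‖x'‖ := apply_le_norm _ _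
      rw [hh1, hx'1, mul_one] at h1
      linarith
    calc ‖k + lam • x'‖ = h k + lam * h x' := by rw [← hhz', happval]
    _ ≤ (g k + ε * M) + lam * 1 := by
        have := mul_le_mul_of_nonneg_left hhx'ub hlam0.le
        linarith
    _ ≤ ρ := by
        have := hgk k hk
        rw [hρdef]
        linarith
  · -- y is not in the ball
    rw [mem_closedBall, dist_eq_norm, sub_neg_eq_add, not_le]
    have h1 : F (y + lam • x') ≤ ‖y + lam • x'‖ := by
      have := apply_le_norm F (y + lam • x')
      rw [hF1, one_mul] at this
      linarith
    have h2 : F (y + lam • x') = F y + lam := by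
      rw [map_add, map_smul]
      have : F x' = 1 := hFx'
      rw [smul_eq_mul, this, mul_one]
    have h3 : g y - ε * M ≤ F y := by
      have ha : (g - F) y ≤ ‖g - F‖ * ‖y‖ := apply_le_norm _ _
      rw [ContinuousLinearMap.sub_apply] at ha
      have hb : ‖g - F‖ * ‖y‖ ≤ ε * M := by
        apply mul_le_mul ?_ hyM (norm_nonneg y) hε.le
        rw [norm_sub_rev]
        exact hFg.le
      linarith
    have h4 : 4 * (ε * M) < δ₀ := by
      have : ε * (4 * M) < δ₀ := by
        rw [hεdef]
        rw [div_mul_eq_mul_div, div_lt_iff₀ (by positivity : (0:ℝ) < 8 * (M + 1))]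
        nlinarith
      linarith
    have h5 : f₁ y = s₁ + δ₀ := by rw [hδ₀def]; ring
    rw [hρdef]
    linarith

lemma dense_of_mip (mip : HasMIP X) (f : StrongDual ℝ X) (hf : ‖f‖ = 1) :
    f ∈ closure {g : StrongDual ℝ X | ‖g‖ ≤ 1 ∧
          ∀ ε : ℝ, 0 < ε → ∃ (x : X) (l : ℝ), l < g x ∧
            Metric.diam {h : StrongDual ℝ X | ‖h‖ ≤ 1 ∧ l < h x} < ε} := by
  -- the open sets of functionals lying in a small slice
  set U : ℕ → Set (StrongDual ℝ X) := fun n =>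
    {g : StrongDual ℝ X | ∃ (x : X) (l : ℝ), l < g x ∧
      Metric.diam {h : StrongDual ℝ X | ‖h‖ ≤ 1 ∧ l < h x} < 1 / (n + 1)} with hU
  have hUopen : ∀ n, IsOpen (U n) := by
    intro n
    have : U n = ⋃ (x : X) (l : ℝ)
        (_ : Metric.diam {h : StrongDual ℝ X | ‖h‖ ≤ 1 ∧ l < h x} < 1 / (n + 1)),
        {g : StrongDual ℝ X | l < g x} := by
      ext g
      simp only [hU, Set.mem_setOf_eq, Set.mem_iUnion]
      constructor
      · rintro ⟨x, l, h1, h2⟩; exact ⟨x, l, h2, h1⟩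
      · rintro ⟨x, l, h2, h1⟩; exact ⟨x, l, h1, h2⟩
    rw [this]
    refine isOpen_iUnion fun x => isOpen_iUnion fun l => isOpen_iUnion fun _ => ?_
    exact isOpen_lt continuous_const (ContinuousLinearMap.apply ℝ ℝ x).continuous
  -- Baire category on the dual sphere
  set S : Set (StrongDual ℝ X) := Metric.sphere 0 1 with hS
  haveI : CompleteSpace ↥S := Metric.isClosed_sphere.completeSpace_coe
  haveI : BaireSpace ↥S := BaireSpace.of_completelyPseudoMetrizable
  have hUdense : ∀ n : ℕ, Dense (Subtype.val ⁻¹' (U n) : Set ↥S) := by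
    intro n
    rw [Metric.dense_iff]
    rintro ⟨f', hf's⟩ r hr
    have hf'1 : ‖f'‖ = 1 := by rwa [hS, mem_sphere_zero_iff_norm] at hf's
    have hpos : (0:ℝ) < 1 / (n + 1) := by positivity
    obtain ⟨g, x, l, hg1, hgf, hlt, hdm⟩ := mip_core mip f' hf'1 hpos hr
    refine ⟨⟨g, by rwa [hS, mem_sphere_zero_iff_norm]⟩, ?_, ⟨x, l, hlt, hdm⟩⟩
    rw [Metric.mem_ball, Subtype.dist_eq, dist_eq_norm]
    exact hgf
  have hD : Dense (⋂ n : ℕ, (Subtype.val ⁻¹' (U n) : Set ↥S)) :=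
    dense_iInter_of_isOpen
      (fun n => (hUopen n).preimage continuous_subtype_val) hUdense
  rw [Metric.mem_closure_iff]
  intro r hr
  have hfS : f ∈ S := by rwa [hS, mem_sphere_zero_iff_norm]
  obtain ⟨⟨g, hgS⟩, hgball, hgmem⟩ :=
    (Metric.dense_iff.mp hD) ⟨f, hfS⟩ r hr
  rw [Set.mem_iInter] at hgmem
  refine ⟨g, ⟨?_, ?_⟩, ?_⟩
  · rw [hS, mem_sphere_zero_iff_norm] at hgS
    exact hgS.le
  · intro ε hε
    obtain ⟨n, hn⟩ := exists_nat_one_div_lt hε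
    obtain ⟨x, l, h1, h2⟩ := hgmem n
    exact ⟨x, l, h1, by linarith⟩
  · rw [Metric.mem_ball, Subtype.dist_eq, dist_comm] at hgball
    exact hgball

end GGS

/-- **Giles–Gregory–Sims.** A Banach space has the Mazur intersection property iff the
`w*`-denting points of `B_{X*}` are norm dense in `S_{X*}`.  Here `g ∈ B_{X*}` is a
`w*`-denting point if for every `ε > 0` there are `x ∈ X` and `λ ∈ ℝ` with `g x > λ` such
that the `w*`-slice `{h ∈ B_{X*} : h x > λ}` has norm diameter less than `ε`. -/
theorem hasMIP_iff_weakStarDenting_dense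
    (X : Type*) [NormedAddCommGroup X] [NormedSpace ℝ X] [CompleteSpace X] :
    HasMIP X ↔
      ∀ f : StrongDual ℝ X, ‖f‖ = 1 →
        f ∈ closure {g : StrongDual ℝ X | ‖g‖ ≤ 1 ∧
          ∀ ε : ℝ, 0 < ε → ∃ (x : X) (l : ℝ), l < g x ∧
            Metric.diam {h : StrongDual ℝ X | ‖h‖ ≤ 1 ∧ l < h x} < ε} := by
  constructor
  · intro mip f hf
    exact dense_of_mip mip f hf
  · intro h
    exact mip_of_dense h
end

section
/- Let (X,‖·‖) be a real Banach space whose norm is Fréchet differentiable at every point of X ∖ {0}. Then (X,‖·‖) has the Mazur intersection property. -/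
open Metric Set


/-- Ekeland's variational principle, continuous version on a closed subset of a
Banach space. -/
lemma ekeland_aux {X : Type*} [NormedAddCommGroup X] [NormedSpace ℝ X] [CompleteSpace X]
    (S : Set X) (hS : IsClosed S) (φ : X → ℝ) (hφ : Continuous φ)
    (B : ℝ) (hbd : ∀ z ∈ S, B ≤ φ z) (ε : ℝ) (hε : 0 < ε)
    (x : X) (hx : x ∈ S) :
    ∃ y ∈ S, φ y ≤ φ x ∧ ∀ z ∈ S, φ y ≤ φ z + ε * ‖z - y‖ := by
  classical
  set T : X → Set X := fun w => {z | z ∈ S ∧ φ z + ε * ‖z - w‖ ≤ φ w} with hT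
  have hself : ∀ w ∈ S, w ∈ T w := fun w hw => ⟨hw, by simp⟩
  have htrans : ∀ w w' z, w' ∈ T w → z ∈ T w' → z ∈ T w := by
    intro w w' z hw' hz
    refine ⟨hz.1, ?_⟩
    have h1 : ‖z - w‖ ≤ ‖z - w'‖ + ‖w' - w‖ := norm_sub_le_norm_sub_add_norm_sub _ _ _
    nlinarith [hz.2, hw'.2]
  have hTS : ∀ w, T w ⊆ S := fun w z hz => hz.1
  have hclosed : ∀ w, IsClosed (T w) := by
    intro w
    exact hS.inter (isClosed_le
      (hφ.add (continuous_const.mul ((continuous_id.sub continuous_const).norm)))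
      continuous_const)
  have hbdd : ∀ w, BddBelow (φ '' T w) := by
    intro w
    exact ⟨B, by rintro _ ⟨z, hz, rfl⟩; exact hbd z (hTS w hz)⟩
  have hstep : ∀ (w : X), w ∈ S → ∀ n : ℕ, ∃ z, z ∈ T w ∧
      φ z ≤ sInf (φ '' T w) + (1/2 : ℝ)^n := by
    intro w hw n
    have hne : (φ '' T w).Nonempty := ⟨φ w, w, hself w hw, rfl⟩
    obtain ⟨b, ⟨z, hz, rfl⟩, hb⟩ := Real.lt_sInf_add_pos hne
      (by positivity : (0:ℝ) < (1/2:ℝ)^n)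
    exact ⟨z, hz, hb.le⟩
  let next : ℕ → {w : X // w ∈ S} → {w : X // w ∈ S} := fun n w =>
    ⟨(hstep w.1 w.2 n).choose, ((hstep w.1 w.2 n).choose_spec.1).1⟩
  let seq : ℕ → {w : X // w ∈ S} := fun n => Nat.rec ⟨x, hx⟩ next n
  let u : ℕ → X := fun n => (seq n).1
  have hu0 : u 0 = x := rfl
  have huS : ∀ n, u n ∈ S := fun n => (seq n).2
  have hseq : ∀ n, u (n+1) ∈ T (u n) ∧
      φ (u (n+1)) ≤ sInf (φ '' T (u n)) + (1/2 : ℝ)^n := fun n =>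
    (hstep (u n) (huS n) n).choose_spec
  have hmono : ∀ n m, n ≤ m → u m ∈ T (u n) := by
    intro n m hnm
    induction m with
    | zero =>
      have : n = 0 := Nat.le_zero.mp hnm
      subst this; exact hself _ (huS 0)
    | succ k ih =>
      rcases Nat.lt_or_ge n (k+1) with hlt | hge
      · exact htrans _ _ _ (ih (Nat.lt_succ_iff.mp hlt)) (hseq k).1
      · have : n = k + 1 := le_antisymm hnm hge
        subst this; exact hself (u (k+1)) (huS (k+1))
  set a : ℕ → ℝ := fun n => φ (u n) with ha
  have hanti : Antitone a := by
    refine antitone_nat_of_succ_le (fun n => ?_)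
    have h2 := (hseq n).1.2
    nlinarith [norm_nonneg (u (n+1) - u n)]
  have habdd : BddBelow (Set.range a) := ⟨B, by rintro _ ⟨n, rfl⟩; exact hbd _ (huS n)⟩
  set L : ℝ := ⨅ n, a n with hL
  have haL : Filter.Tendsto a Filter.atTop (nhds L) := tendsto_atTop_ciInf hanti habdd
  have hLle : ∀ n, L ≤ a n := fun n => ciInf_le habdd n
  have key : ∀ i j, i ≤ j → dist (u i) (u j) ≤ (a i - a j) / ε := by
    intro i j hij
    have h2 := (hmono i j hij).2
    rw [dist_eq_norm, norm_sub_rev, le_div_iff₀ hε]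
    nlinarith
  have hcauchy : CauchySeq u := by
    apply cauchySeq_of_le_tendsto_0 (fun N => (a N - L) / ε)
    · intro n m N hn hm
      rcases le_total n m with hnm | hmn
      · refine (key n m hnm).trans ?_
        gcongr
        · exact hanti hn
        · exact hLle m
      · rw [dist_comm]
        refine (key m n hmn).trans ?_
        gcongr
        · exact hanti hm
        · exact hLle n
    · have : Filter.Tendsto (fun N => (a N - L) / ε) Filter.atTop (nhds ((L - L)/ε)) :=
        (haL.sub tendsto_const_nhds).div_const ε
      simpa using this
  obtain ⟨y, hy⟩ := cauchySeq_tendsto_of_complete hcauchy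
  have hyS : y ∈ S := hS.mem_of_tendsto hy (Filter.Eventually.of_forall huS)
  have hyT : ∀ n, y ∈ T (u n) := by
    intro n
    refine (hclosed (u n)).mem_of_tendsto hy ?_
    filter_upwards [Filter.eventually_ge_atTop n] with m hm
    exact hmono n m hm
  have hφy : Filter.Tendsto a Filter.atTop (nhds (φ y)) := (hφ.continuousAt.tendsto).comp hy
  have hLy : L = φ y := tendsto_nhds_unique haL hφy
  refine ⟨y, hyS, ?_, ?_⟩
  · have := (hyT 0).2
    rw [hu0] at this
    nlinarith [norm_nonneg (y - x)]
  · intro z hz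
    by_contra hcon
    push_neg at hcon
    -- z is in every T (u n)
    have hzT : ∀ n, z ∈ T (u n) := by
      intro n
      refine ⟨hz, ?_⟩
      have h1 : ‖z - u n‖ ≤ ‖z - y‖ + ‖y - u n‖ := norm_sub_le_norm_sub_add_norm_sub _ _ _
      have h2 := (hyT n).2
      nlinarith
    have hle : ∀ n, a (n+1) ≤ φ z + (1/2:ℝ)^n := by
      intro n
      refine (hseq n).2.trans ?_
      gcongr
      exact csInf_le (hbdd _) ⟨z, hzT n, rfl⟩
    have h3 : φ y ≤ φ z := by
      have t1 : Filter.Tendsto (fun n => a (n+1)) Filter.atTop (nhds (φ y)) := by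
        rw [← hLy]; exact haL.comp (Filter.tendsto_add_atTop_nat 1)
      have t2 : Filter.Tendsto (fun n : ℕ => φ z + (1/2:ℝ)^n) Filter.atTop (nhds (φ z + 0)) := by
        exact tendsto_const_nhds.add (tendsto_pow_atTop_nhds_zero_of_lt_one (by norm_num) (by norm_num))
      have := le_of_tendsto_of_tendsto' t1 (by simpa using t2) hle
      simpa using this
    nlinarith [norm_nonneg (z - y)]

set_option maxHeartbeats 1000000 in
/-- Density of Fréchet derivatives of the norm in the dual sphere. -/
lemma exists_deriv_near {X : Type*} [NormedAddCommGroup X] [NormedSpace ℝ X] [CompleteSpace X]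
    (h : ∀ x : X, x ≠ 0 → ∃ f : StrongDual ℝ X,
      HasFDerivAt (fun y : X => ‖y‖) f x)
    (g : StrongDual ℝ X) (hg : ‖g‖ = 1) (ε : ℝ) (hε : 0 < ε) (hε1 : ε ≤ 1) :
    ∃ (y : X) (f : StrongDual ℝ X), ‖y‖ = 1 ∧
      HasFDerivAt (fun z : X => ‖z‖) f y ∧ ‖f - g‖ ≤ 3 * ε := by
  classical
  -- a point on the sphere where g is nearly 1
  have hε2 : (0:ℝ) ≤ 1 - ε^2 := by nlinarith
  obtain ⟨x, hx1, hx2⟩ := g.exists_lt_apply_of_lt_opNorm (r := 1 - ε^2) (by rw [hg]; nlinarith)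
  obtain ⟨x₁, hx₁def⟩ : ∃ x₁ : X, x₁ = if 0 ≤ g x then x else -x := ⟨_, rfl⟩
  have hx₁norm : ‖x₁‖ < 1 := by
    rw [hx₁def]; split <;> simpa
  have hgx₁ : 1 - ε^2 < g x₁ := by
    rw [hx₁def]
    rcases le_or_gt 0 (g x) with hc | hc
    · rw [if_pos hc]
      rwa [Real.norm_eq_abs, abs_of_nonneg hc] at hx2
    · rw [if_neg (not_le.mpr hc), map_neg]
      rwa [Real.norm_eq_abs, abs_of_neg hc] at hx2
  have hx₁ne : x₁ ≠ 0 := by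
    intro hcon; rw [hcon, map_zero] at hgx₁; nlinarith
  have hx₁pos : 0 < ‖x₁‖ := norm_pos_iff.mpr hx₁ne
  obtain ⟨x₀, hx₀def⟩ : ∃ x₀ : X, x₀ = ‖x₁‖⁻¹ • x₁ := ⟨_, rfl⟩
  have hx₀S : ‖x₀‖ = 1 := by
    rw [hx₀def, norm_smul, norm_inv, norm_norm, inv_mul_cancel₀ hx₁pos.ne']
  have hgx₀ : 1 - ε^2 < g x₀ := by
    have heq : g x₀ = ‖x₁‖⁻¹ * g x₁ := by rw [hx₀def, map_smul, smul_eq_mul]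
    rw [heq]
    have h1 : (1:ℝ) ≤ ‖x₁‖⁻¹ := (one_le_inv₀ hx₁pos).mpr hx₁norm.le
    nlinarith
  -- Ekeland on the sphere
  obtain ⟨y, hyS, hy1, hy2⟩ := ekeland_aux (sphere (0:X) 1) Metric.isClosed_sphere
    (fun z => -(g z)) (by continuity) (-1)
    (by
      intro z hz
      rw [mem_sphere_zero_iff_norm] at hz
      show (-1:ℝ) ≤ -(g z)
      have h1 := g.le_opNorm z
      rw [hg, hz, one_mul, Real.norm_eq_abs] at h1
      have h2 := le_abs_self (g z)
      linarith)
    ε hε x₀ (mem_sphere_zero_iff_norm.mpr hx₀S)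
  rw [mem_sphere_zero_iff_norm] at hyS
  have hy1' : -(g y) ≤ -(g x₀) := hy1
  have hgy : 1 - ε^2 < g y := by linarith
  have hgy1 : g y ≤ 1 := by
    have h1 := g.le_opNorm y
    rw [hg, hyS, one_mul, Real.norm_eq_abs] at h1
    linarith [le_abs_self (g y)]
  obtain ⟨f, hF⟩ := h y (by intro hc; rw [hc, norm_zero] at hyS; norm_num at hyS)
  refine ⟨y, f, hyS, hF, ?_⟩
  -- the key estimate
  have hmain : ∀ v : X, ‖v‖ ≤ 1 → g v ≤ f v + (2*ε + ε^2) := by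
    intro v hv
    refine le_of_forall_pos_le_add (fun c hc => ?_)
    have hlo := (hasFDerivAt_iff_isLittleO_nhds_zero.mp hF).def hc
    rw [Metric.eventually_nhds_iff] at hlo
    obtain ⟨δ, hδ, hδ'⟩ := hlo
    obtain ⟨t, htdef⟩ : ∃ t : ℝ, t = min (δ/2) (1/2) := ⟨_, rfl⟩
    have ht : 0 < t := htdef ▸ lt_min (by linarith) (by norm_num)
    have ht2 : t ≤ 1/2 := htdef ▸ min_le_right _ _
    have htδ : t < δ := by
      rw [htdef]; calc min (δ/2) (1/2) ≤ δ/2 := min_le_left _ _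
        _ < δ := by linarith
    have htv : ‖t • v‖ < δ := by
      rw [norm_smul, Real.norm_eq_abs, abs_of_pos ht]
      nlinarith [norm_nonneg v]
    have hlo2 := hδ' (by rwa [dist_zero_right])
    rw [Real.norm_eq_abs, norm_smul, Real.norm_eq_abs, abs_of_pos ht] at hlo2
    obtain ⟨N, hNdef⟩ : ∃ N : ℝ, N = ‖y + t • v‖ := ⟨_, rfl⟩
    have hfv : f (t • v) = t * f v := by rw [map_smul, smul_eq_mul]
    have hN1 : |N - 1| ≤ t * ‖v‖ := by
      have h1 := abs_norm_sub_norm_le (y + t • v) y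
      rw [← hNdef, hyS] at h1
      simpa [norm_smul, abs_of_pos ht] using h1
    have hNpos : (0:ℝ) < N := by
      have h1 := abs_le.mp hN1
      nlinarith [norm_nonneg v]
    have hNf : N - 1 ≤ t * f v + c * (t * ‖v‖) := by
      rw [hyS, hfv, ← hNdef] at hlo2
      have := (abs_le.mp hlo2).2
      linarith
    obtain ⟨w, hwdef⟩ : ∃ w : X, w = N⁻¹ • (y + t • v) := ⟨_, rfl⟩
    have hNw : N • w = y + t • v := by
      rw [hwdef, smul_smul, mul_inv_cancel₀ hNpos.ne', one_smul]
    have hwS : w ∈ sphere (0:X) 1 := by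
      rw [mem_sphere_zero_iff_norm, hwdef, norm_smul, norm_inv, Real.norm_eq_abs,
        abs_of_pos hNpos, ← hNdef, inv_mul_cancel₀ hNpos.ne']
    have hgw : g y + t * g v = N * g w := by
      have h0 : g (N • w) = N * g w := by rw [map_smul, smul_eq_mul]
      rw [hNw, map_add, map_smul, smul_eq_mul] at h0
      linarith
    have hnw : N * ‖w - y‖ = ‖(1 - N) • y + t • v‖ := by
      have heq : N • (w - y) = (1 - N) • y + t • v := by
        rw [smul_sub, hNw, sub_smul, one_smul]; abel
      calc N * ‖w - y‖ = ‖N • (w - y)‖ := by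
            rw [norm_smul, Real.norm_eq_abs, abs_of_pos hNpos]
        _ = ‖(1 - N) • y + t • v‖ := by rw [heq]
    have hbound : ‖(1 - N) • y + t • v‖ ≤ |1 - N| + t * ‖v‖ := by
      refine (norm_add_le _ _).trans ?_
      rw [norm_smul, Real.norm_eq_abs, hyS, mul_one, norm_smul, Real.norm_eq_abs,
        abs_of_pos ht]
    have hek : -(g y) ≤ -(g w) + ε * ‖w - y‖ := hy2 w hwS
    have hstep1 : g y + t * g v ≤ N * g y + 2 * ε * t := by
      have h1 : g w ≤ g y + ε * ‖w - y‖ := by linarith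
      have h2 : N * g w ≤ N * (g y + ε * ‖w - y‖) :=
        mul_le_mul_of_nonneg_left h1 hNpos.le
      have h4 : ε * (N * ‖w - y‖) ≤ ε * (|1 - N| + t * ‖v‖) := by
        rw [hnw]; exact mul_le_mul_of_nonneg_left hbound hε.le
      have h5 : |1 - N| ≤ t * ‖v‖ := by rwa [abs_sub_comm]
      have h6 : ε * |1 - N| ≤ ε * (t * ‖v‖) := mul_le_mul_of_nonneg_left h5 hε.le
      have h7 : ε * (t * ‖v‖) ≤ ε * (t * 1) :=
        mul_le_mul_of_nonneg_left (mul_le_mul_of_nonneg_left hv ht.le) hε.le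
      nlinarith [h2, h4, h6, h7, hgw]
    have hsplit : (N - 1) * g y ≤ (N - 1) + t * ‖v‖ * ε^2 := by
      have h1 : (N - 1) * (g y - 1) ≤ |N - 1| * (1 - g y) := by
        have h2 := neg_abs_le (N - 1)
        nlinarith
      have h2 : |N - 1| * (1 - g y) ≤ (t * ‖v‖) * ε^2 := by
        apply mul_le_mul hN1 (by nlinarith) (by linarith) (by positivity)
      nlinarith
    have hfinal : t * g v ≤ t * (f v + (2*ε + ε^2) + c) := by
      nlinarith [mul_le_mul_of_nonneg_left hv (mul_pos hc ht).le]
    exact le_of_mul_le_mul_left (by linarith [hfinal]) ht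
  have hnorm : ‖g - f‖ ≤ 2*ε + ε^2 := by
    apply ContinuousLinearMap.opNorm_le_of_unit_norm (by positivity)
    intro v hv
    rw [Real.norm_eq_abs, abs_le]
    constructor
    · have h1 := hmain (-v) (by rw [norm_neg, hv])
      simp only [map_neg, ContinuousLinearMap.sub_apply] at h1 ⊢
      linarith
    · have h1 := hmain v hv.le
      simp only [ContinuousLinearMap.sub_apply]
      linarith
  calc ‖f - g‖ = ‖g - f‖ := norm_sub_rev _ _
    _ ≤ 2*ε + ε^2 := hnorm
    _ ≤ 3*ε := by nlinarith

/-- Šmulyan-type ball separation: if the norm has a Fréchet derivative `f` at a unit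
vector `u` and `f ≥ δ` on a bounded set `K`, then some closed ball contains `K` and
misses the origin. -/
lemma ball_far {X : Type*} [NormedAddCommGroup X] [NormedSpace ℝ X]
    (u : X) (f : StrongDual ℝ X) (hu : ‖u‖ = 1)
    (hd : HasFDerivAt (fun y : X => ‖y‖) f u) (K : Set X) (M : ℝ) (hM0 : 0 ≤ M)
    (hM : ∀ y ∈ K, ‖y‖ ≤ M) (δ : ℝ) (hδ : 0 < δ) (hf : ∀ y ∈ K, δ ≤ f y) :
    ∃ (c : X) (R : ℝ), (∀ y ∈ K, y ∈ closedBall c R) ∧ (0:X) ∉ closedBall c R := by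
  obtain ⟨c', hc'def⟩ : ∃ c' : ℝ, c' = δ / (2 * (M + 1)) := ⟨_, rfl⟩
  have hc' : 0 < c' := hc'def ▸ by positivity
  have hc'M : c' * M ≤ δ / 2 := by
    rw [hc'def, div_mul_eq_mul_div, div_le_div_iff₀ (by positivity) (by norm_num)]
    nlinarith
  have hlo := (hasFDerivAt_iff_isLittleO_nhds_zero.mp hd).def hc'
  rw [Metric.eventually_nhds_iff] at hlo
  obtain ⟨δ', hδ', hlo'⟩ := hlo
  obtain ⟨t, htdef⟩ : ∃ t : ℝ, t = max 1 ((M + 1) / δ') := ⟨_, rfl⟩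
  have ht1 : 1 ≤ t := htdef ▸ le_max_left _ _
  have ht0 : 0 < t := lt_of_lt_of_le one_pos ht1
  have htM : M + 1 ≤ t * δ' := by
    have h1 : (M + 1) / δ' ≤ t := htdef ▸ le_max_right _ _
    rwa [div_le_iff₀ hδ'] at h1
  have key : ∀ y ∈ K, ‖y - t • u‖ ≤ t - δ / 2 := by
    intro y hy
    have hyM := hM y hy
    have hhn : ‖(-t⁻¹) • y‖ = t⁻¹ * ‖y‖ := by
      rw [norm_smul, Real.norm_eq_abs, abs_neg, abs_of_pos (inv_pos.mpr ht0)]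
    have hlt : dist ((-t⁻¹) • y) 0 < δ' := by
      rw [dist_zero_right, hhn]
      have h2 : t⁻¹ * ‖y‖ ≤ t⁻¹ * M := mul_le_mul_of_nonneg_left hyM (inv_pos.mpr ht0).le
      have h3 : t⁻¹ * (t * δ') = δ' := by field_simp
      nlinarith [mul_le_mul_of_nonneg_left htM (inv_pos.mpr ht0).le]
    have hest := hlo' hlt
    rw [hu, hhn, Real.norm_eq_abs] at hest
    have hfy : f ((-t⁻¹) • y) = (-t⁻¹) * f y := by rw [map_smul, smul_eq_mul]
    rw [hfy] at hest
    have hid : y - t • u = (-t) • (u + (-t⁻¹) • y) := by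
      rw [smul_add, smul_smul, neg_mul_neg, mul_inv_cancel₀ ht0.ne', one_smul, neg_smul]
      abel
    have hnorm : ‖y - t • u‖ = t * ‖u + (-t⁻¹) • y‖ := by
      rw [hid, norm_smul, Real.norm_eq_abs, abs_neg, abs_of_pos ht0]
    have habs := (abs_le.mp hest).2
    -- ‖u + (-t⁻¹)•y‖ ≤ 1 + (-t⁻¹) * f y + c' * (t⁻¹ * ‖y‖)
    have hfyK := hf y hy
    have hc'y : c' * ‖y‖ ≤ δ / 2 := by
      have := mul_le_mul_of_nonneg_left hyM hc'.le
      linarith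
    have htinv : t * t⁻¹ = 1 := mul_inv_cancel₀ ht0.ne'
    rw [hnorm]
    have hexp : t * ‖u + (-t⁻¹) • y‖ ≤ t - f y + c' * ‖y‖ := by
      have h4 : ‖u + (-t⁻¹) • y‖ ≤ 1 + (-t⁻¹) * f y + c' * (t⁻¹ * ‖y‖) := by linarith
      have h5 := mul_le_mul_of_nonneg_left h4 ht0.le
      have h6 : t * (1 + (-t⁻¹) * f y + c' * (t⁻¹ * ‖y‖)) = t - f y + c' * ‖y‖ := by
        field_simp; ring
      linarith
    linarith
  refine ⟨t • u, t - δ / 2, ?_, ?_⟩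
  · intro y hy
    rw [mem_closedBall, dist_eq_norm]
    exact key y hy
  · rw [mem_closedBall, dist_eq_norm, zero_sub, norm_neg, norm_smul, Real.norm_eq_abs,
      abs_of_pos ht0, hu, mul_one]
    push_neg
    linarith

/-- **Mazur.** A Banach space whose norm is Fréchet differentiable away from the origin
has the Mazur intersection property. -/
theorem hasMIP_of_frechet_differentiable_norm
    (X : Type*) [NormedAddCommGroup X] [NormedSpace ℝ X] [CompleteSpace X]
    (h : ∀ x : X, x ≠ 0 → ∃ f : StrongDual ℝ X,
      HasFDerivAt (fun y : X => ‖y‖) f x) :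
    HasMIP X := by
  intro K hKne hKb hKcl hKcv
  refine ⟨{p : X × ℝ | K ⊆ closedBall p.1 p.2}, ?_⟩
  apply Set.eq_of_subset_of_subset
  · intro y hy
    exact Set.mem_iInter₂.mpr fun p hp => hp hy
  · intro z hz
    by_contra hzK
    -- translate so that the missing point is the origin
    obtain ⟨K', hK'def⟩ : ∃ K' : Set X, K' = (fun w => w - z) '' K := ⟨_, rfl⟩
    have hK'ne : K'.Nonempty := hK'def ▸ hKne.image _
    have hK'pre : K' = (fun w => w + z) ⁻¹' K := by
      rw [hK'def]; ext w
      constructor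
      · rintro ⟨a, ha, rfl⟩; simpa using ha
      · intro hw; exact ⟨w + z, hw, add_sub_cancel_right w z⟩
    have hK'cl : IsClosed K' := by
      rw [hK'pre]; exact hKcl.preimage (continuous_id.add continuous_const)
    have hK'cv : Convex ℝ K' := by
      have h1 := hKcv.translate (-z)
      have h2 : (fun w => -z + w) '' K = K' := by
        rw [hK'def]
        apply Set.image_congr
        intro a _; abel
      rwa [h2] at h1
    have h0K' : (0:X) ∉ K' := by
      rw [hK'def]
      rintro ⟨a, ha, ha2⟩
      have : a = z := by
        have := sub_eq_zero.mp ha2; exact this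
      exact hzK (this ▸ ha)
    -- bound for K'
    obtain ⟨M₀, hM₀⟩ := hKb.exists_norm_le
    obtain ⟨M, hMdef⟩ : ∃ M : ℝ, M = max (M₀ + ‖z‖) 0 := ⟨_, rfl⟩
    have hM0 : 0 ≤ M := hMdef ▸ le_max_right _ _
    have hMK' : ∀ w ∈ K', ‖w‖ ≤ M := by
      rw [hK'def]
      rintro _ ⟨a, ha, rfl⟩
      have h1 : ‖a - z‖ ≤ ‖a‖ + ‖z‖ := norm_sub_le _ _
      have h2 := hM₀ a ha
      rw [hMdef]
      have := le_max_left (M₀ + ‖z‖) (0:ℝ)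
      linarith
    -- separation
    obtain ⟨g₀, s, hs1, hs2⟩ := geometric_hahn_banach_point_closed hK'cv hK'cl h0K'
    rw [map_zero] at hs1
    obtain ⟨b, hb⟩ := hK'ne
    have hg₀b := hs2 b hb
    have hg₀ne : g₀ ≠ 0 := by
      intro hcon; rw [hcon] at hg₀b; simp at hg₀b; linarith
    have hg₀pos : 0 < ‖g₀‖ := norm_pos_iff.mpr hg₀ne
    obtain ⟨g, hgdef⟩ : ∃ g : StrongDual ℝ X, g = ‖g₀‖⁻¹ • g₀ := ⟨_, rfl⟩
    have hg1 : ‖g‖ = 1 := by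
      rw [hgdef, norm_smul, norm_inv, norm_norm, inv_mul_cancel₀ hg₀pos.ne']
    obtain ⟨δ₀, hδ₀def⟩ : ∃ δ₀ : ℝ, δ₀ = s / ‖g₀‖ := ⟨_, rfl⟩
    have hδ₀ : 0 < δ₀ := hδ₀def ▸ div_pos hs1 hg₀pos
    have hgK' : ∀ w ∈ K', δ₀ ≤ g w := by
      intro w hw
      have h1 := hs2 w hw
      rw [hgdef, hδ₀def]
      have : g₀ w = (‖g₀‖⁻¹ • g₀) w * ‖g₀‖ := by
        simp [ContinuousLinearMap.smul_apply, smul_eq_mul]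
        field_simp
      rw [div_le_iff₀ hg₀pos, ← this]
      linarith
    -- perturb g to a derivative
    obtain ⟨ε, hεdef⟩ : ∃ ε : ℝ, ε = min 1 (δ₀ / (6 * (M + 1))) := ⟨_, rfl⟩
    have hε : 0 < ε := hεdef ▸ lt_min one_pos (by positivity)
    have hε1 : ε ≤ 1 := hεdef ▸ min_le_left _ _
    have hεle : ε * (6 * (M + 1)) ≤ δ₀ := by
      have h1 : ε ≤ δ₀ / (6 * (M + 1)) := hεdef ▸ min_le_right _ _
      rwa [le_div_iff₀ (by positivity)] at h1
    obtain ⟨u, f, hu1, hF, hfg⟩ := exists_deriv_near h g hg1 ε hε hε1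
    have hfK' : ∀ w ∈ K', δ₀ / 2 ≤ f w := by
      intro w hw
      have h1 := hgK' w hw
      have h2 : |(g - f) w| ≤ ‖g - f‖ * ‖w‖ := by
        have := (g - f).le_opNorm w
        rwa [Real.norm_eq_abs] at this
      have h3 : ‖g - f‖ ≤ 3 * ε := by rw [norm_sub_rev]; exact hfg
      have h4 : ‖w‖ ≤ M := hMK' w hw
      have h5 : (g - f) w = g w - f w := by simp [ContinuousLinearMap.sub_apply]
      have h6 : g w - f w ≤ 3 * ε * M := by
        have := (abs_le.mp h2).2
        have h7 : ‖g - f‖ * ‖w‖ ≤ (3 * ε) * M :=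
          mul_le_mul h3 h4 (norm_nonneg w) (by positivity)
        rw [h5] at this
        linarith
      nlinarith
    -- the separating ball
    obtain ⟨c, R, hcR1, hcR2⟩ := ball_far u f hu1 hF K' M hM0 hMK' (δ₀/2) (by linarith) hfK'
    have hmem : (c + z, R) ∈ {p : X × ℝ | K ⊆ closedBall p.1 p.2} := by
      intro w hw
      have h1 : w - z ∈ K' := hK'def ▸ ⟨w, hw, rfl⟩
      have h2 := hcR1 _ h1
      rw [mem_closedBall, dist_eq_norm] at h2 ⊢
      have : w - (c + z) = w - z - c := by abel
      rwa [this]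
    have hz' := Set.mem_iInter₂.mp hz (c + z, R) hmem
    rw [mem_closedBall, dist_eq_norm] at hz' hcR2
    apply hcR2
    have : z - (c + z) = -c := by abel
    rw [this, norm_neg] at hz'
    simpa using hz'
end
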